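/- arXiv:2408.12283 — 7 statements merged into one kernel-verified Lean document; each statement's English description precedes it below -/
import Mathlib

section
/- Let H be a real Hilbert space and let F : H → H be strongly monotone with constant γ > 0 and Lipschitz continuous with constant L ≥ γ. Then for every f ∈ H there exists a unique a ∈ H with F(a) = f; in other words, F is a bijection of H onto itself (Zarantonello's lemma). -/
open scoped RealInnerProductSpace

/-- Zarantonello's lemma: a strongly monotone, Lipschitz continuous operator on a real
Hilbert space is a bijection; each equation `F(a) = f` has a unique solution. -/
theorem stmt_2 {H : Type*} [NormedAddCommGroup H] [InnerProductSpace ℝ H] [CompleteSpace H]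
    (F : H → H) (γ L : ℝ) (hγ : 0 < γ) (hγL : γ ≤ L)
    (hmono : ∀ a b : H, γ * ‖a - b‖ ^ 2 ≤ ⟪F a - F b, a - b⟫)
    (hlip : ∀ a b : H, ‖F a - F b‖ ≤ L * ‖a - b‖) :
    (∀ f : H, ∃! a : H, F a = f) ∧ Function.Bijective F := by
  have hL : 0 < L := lt_of_lt_of_le hγ hγL
  set t : ℝ := γ / L ^ 2 with ht
  have htpos : 0 < t := div_pos hγ (by positivity)
  have hc : 0 ≤ 1 - γ ^ 2 / L ^ 2 := by
    have : γ ^ 2 ≤ L ^ 2 := by nlinarith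
    have : γ ^ 2 / L ^ 2 ≤ 1 := by
      rw [div_le_one (by positivity)]; exact this
    linarith
  set k : ℝ := Real.sqrt (1 - γ ^ 2 / L ^ 2) with hk
  have hk0 : 0 ≤ k := Real.sqrt_nonneg _
  have hksq : k ^ 2 = 1 - γ ^ 2 / L ^ 2 := Real.sq_sqrt hc
  have hk1 : k < 1 := by
    have : k ^ 2 < 1 := by
      rw [hksq]
      have : 0 < γ ^ 2 / L ^ 2 := by positivity
      linarith
    nlinarith
  -- injectivity of F
  have hinj : Function.Injective F := by
    intro a b hab
    have h := hmono a b
    rw [hab, sub_self, inner_zero_left] at h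
    have : ‖a - b‖ ^ 2 ≤ 0 := by nlinarith
    have : ‖a - b‖ = 0 := by nlinarith [sq_nonneg ‖a - b‖, norm_nonneg (a - b)]
    have := norm_sub_eq_zero_iff.mp this
    exact this
  have hexu : ∀ f : H, ∃! a : H, F a = f := by
    intro f
    set g : H → H := fun x => x - t • (F x - f) with hg
    -- g is Lipschitz with constant k
    have hgl : ∀ x y : H, ‖g x - g y‖ ≤ k * ‖x - y‖ := by
      intro x y
      have hdiff : g x - g y = (x - y) - t • (F x - F y) := by
        simp only [hg, smul_sub]
        abel
      have hsq : ‖g x - g y‖ ^ 2 ≤ k ^ 2 * ‖x - y‖ ^ 2 := by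
        rw [hdiff, norm_sub_sq_real]
        have h1 : ⟪x - y, t • (F x - F y)⟫ = t * ⟪F x - F y, x - y⟫ := by
          rw [real_inner_smul_right, real_inner_comm]
        have h2 : ‖t • (F x - F y)‖ ^ 2 = t ^ 2 * ‖F x - F y‖ ^ 2 := by
          rw [norm_smul]
          rw [Real.norm_eq_abs, mul_pow, sq_abs]
        rw [h1, h2, hksq]
        have hm := hmono x y
        have hl := hlip x y
        have hl2 : ‖F x - F y‖ ^ 2 ≤ L ^ 2 * ‖x - y‖ ^ 2 := by
          nlinarith [norm_nonneg (F x - F y), norm_nonneg (x - y)]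
        have htL : t ^ 2 * L ^ 2 = γ ^ 2 / L ^ 2 := by
          rw [ht, div_pow, div_mul_eq_mul_div, div_eq_div_iff (by positivity) (by positivity)]; ring
        have hm' : -(2 * (t * ⟪F x - F y, x - y⟫)) ≤ -(2 * (t * (γ * ‖x - y‖ ^ 2))) := by
          have := mul_le_mul_of_nonneg_left hm (le_of_lt htpos)
          linarith
        have hl2' : t ^ 2 * ‖F x - F y‖ ^ 2 ≤ t ^ 2 * (L ^ 2 * ‖x - y‖ ^ 2) :=
          mul_le_mul_of_nonneg_left hl2 (sq_nonneg t)
        have htγ : t * γ = γ ^ 2 / L ^ 2 := by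
          rw [ht, div_mul_eq_mul_div, div_eq_div_iff (by positivity) (by positivity)]; ring
        nlinarith [hm', hl2']
      calc ‖g x - g y‖ = Real.sqrt (‖g x - g y‖ ^ 2) := by
            rw [Real.sqrt_sq (norm_nonneg _)]
        _ ≤ Real.sqrt (k ^ 2 * ‖x - y‖ ^ 2) := Real.sqrt_le_sqrt hsq
        _ = k * ‖x - y‖ := by
            rw [Real.sqrt_mul (sq_nonneg k), Real.sqrt_sq hk0,
              Real.sqrt_sq (norm_nonneg _)]
    have hcontr : ContractingWith ⟨k, hk0⟩ g := by
      constructor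
      · exact_mod_cast hk1
      · intro x y
        rw [edist_dist, edist_dist]
        rw [← ENNReal.ofReal_coe_nnreal (p := ⟨k, hk0⟩)]
        rw [← ENNReal.ofReal_mul (by exact_mod_cast hk0)]
        exact ENNReal.ofReal_le_ofReal (by
          rw [dist_eq_norm, dist_eq_norm]; exact hgl x y)
    obtain ⟨a, ha, -⟩ := hcontr.exists_fixedPoint 0 (by
      rw [edist_dist]; exact ENNReal.ofReal_ne_top)
    have hFa : F a = f := by
      have : a - t • (F a - f) = a := ha
      have h2 : t • (F a - f) = 0 := by
        have := sub_eq_self.mp this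
        exact this
      have h3 : F a - f = 0 := by
        rcases smul_eq_zero.mp h2 with h | h
        · exact absurd h (ne_of_gt htpos)
        · exact h
      exact sub_eq_zero.mp h3
    exact ⟨a, hFa, fun b hb => hinj (hb.trans hFa.symm)⟩
  refine ⟨hexu, hinj, fun f => ?_⟩
  obtain ⟨a, ha, _⟩ := hexu f
  exact ⟨a, ha⟩
end

section
/- Let E be a finite-dimensional real inner product space and W : E → ℝ twice continuously differentiable with constants 0 < γ ≤ L such that γ‖ξ‖² ≤ D²W(x)[ξ, ξ] ≤ L‖ξ‖² for all x, ξ ∈ E. Fix parameters 0 < ρ ≤ 1/2 and 0 < σ < 1/2, let a ∈ E and let δ ≠ 0 be the Newton direction at a. Then the set {k ∈ ℕ : W(a + ρᵏδ) ≤ W(a) + σρᵏ⟨∇W(a), δ⟩} is nonempty, and the backtracking step size τ = max{ρᵏ : k ∈ ℕ, W(a + ρᵏδ) ≤ W(a) + σρᵏ⟨∇W(a), δ⟩} is well defined and satisfies 0 < τ* ≤ τ ≤ 1 with lower bound τ* = 2ρ(1 − σ)γ/L. -/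
open scoped RealInnerProductSpace

-- Taylor-type upper bound along a ray
lemma taylor_upper {E : Type*} [NormedAddCommGroup E] [InnerProductSpace ℝ E]
    (W : E → ℝ) (L : ℝ) (hW : ContDiff ℝ 2 W)
    (a δ : E)
    (hup : ∀ x : E, iteratedFDeriv ℝ 2 W x ![δ, δ] ≤ L * ‖δ‖ ^ 2)
    {t : ℝ} (ht : 0 ≤ t) :
    W (a + t • δ) ≤ W a + t * (fderiv ℝ W a δ) + L * ‖δ‖ ^ 2 * t ^ 2 / 2 := by
  set c : ℝ → E := fun s => a + s • δ with hc
  have hcd : ∀ s : ℝ, HasDerivAt c δ s := fun s => by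
    have := ((hasDerivAt_id s).smul_const δ).const_add a; rw [one_smul] at this; exact this
  have hW1 : Differentiable ℝ W := hW.differentiable (by norm_num)
  have hWF : ContDiff ℝ 1 (fderiv ℝ W) := hW.fderiv_right (by norm_num)
  set h : ℝ → ℝ := fun s => W (c s) with hh
  set h' : ℝ → ℝ := fun s => fderiv ℝ W (c s) δ with hh'
  have hd1 : ∀ s, HasDerivAt h (h' s) s := fun s =>
    ((hW1 (c s)).hasFDerivAt).comp_hasDerivAt s (hcd s)
  set h'' : ℝ → ℝ := fun s => fderiv ℝ (fderiv ℝ W) (c s) δ δ with hh''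
  have hd2 : ∀ s, HasDerivAt h' (h'' s) s := by
    intro s
    have hF : HasDerivAt (fun u => fderiv ℝ W (c u)) (fderiv ℝ (fderiv ℝ W) (c s) δ) s :=
      ((hWF.differentiable one_ne_zero (c s)).hasFDerivAt).comp_hasDerivAt s (hcd s)
    have := ((ContinuousLinearMap.apply ℝ ℝ δ).hasFDerivAt).comp_hasDerivAt s hF
    exact this
  have hbound : ∀ s, h'' s ≤ L * ‖δ‖ ^ 2 := by
    intro s
    have := hup (c s)
    rwa [iteratedFDeriv_two_apply] at this
  -- φ s = h' s - h' 0 - L‖δ‖² s  is antitone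
  set φ : ℝ → ℝ := fun s => h' s - h' 0 - L * ‖δ‖ ^ 2 * s with hφ
  have hφd : ∀ s, HasDerivAt φ (h'' s - L * ‖δ‖ ^ 2) s := by
    intro s
    have := ((hd2 s).sub_const (h' 0)).sub ((hasDerivAt_id s).const_mul (L * ‖δ‖ ^ 2)); rw [mul_one] at this; exact this
  have hφanti : Antitone φ :=
    antitone_of_deriv_nonpos (fun s => (hφd s).differentiableAt)
      (fun s => by rw [(hφd s).deriv]; linarith [hbound s])
  have hφle : ∀ s : ℝ, 0 ≤ s → φ s ≤ 0 := fun s hs => by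
    have := hφanti hs; simpa [hφ] using this
  -- ψ s = h s - h 0 - s*h'0 - L‖δ‖²s²/2 antitone on Ici 0
  set ψ : ℝ → ℝ := fun s => h s - h 0 - s * h' 0 - L * ‖δ‖ ^ 2 * s ^ 2 / 2 with hψ
  have hψd : ∀ s, HasDerivAt ψ (φ s) s := by
    intro s
    have h1 : HasDerivAt (fun u : ℝ => L * ‖δ‖ ^ 2 * u ^ 2 / 2) (L * ‖δ‖ ^ 2 * s) s := by
      have := ((hasDerivAt_pow 2 s).const_mul (L * ‖δ‖ ^ 2)).div_const 2
      exact this.congr_deriv (by rw [show (2:ℕ) - 1 = 1 from rfl]; push_cast; ring)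
    have := (((hd1 s).sub_const (h 0)).sub ((hasDerivAt_id s).mul_const (h' 0))).sub h1
    exact this.congr_deriv (by simp [hφ])
  have hψanti : AntitoneOn ψ (Set.Ici 0) := by
    apply antitoneOn_of_deriv_nonpos (convex_Ici 0)
    · exact fun s _ => (hψd s).continuousAt.continuousWithinAt
    · exact fun s _ => (hψd s).differentiableAt.differentiableWithinAt
    · intro s hs
      rw [(hψd s).deriv]
      exact hφle s (le_of_lt (by simpa using hs))
  have := hψanti (Set.self_mem_Ici) (Set.mem_Ici.mpr ht) ht
  have hψ0 : ψ 0 = 0 := by simp [hψ]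
  rw [hψ0] at this
  have hc0 : c 0 = a := by simp [hc]
  simp only [hψ, hh, hh', hc0] at this
  linarith

/-- Well-definedness and lower bound for the Armijo backtracking step size along a nonzero
Newton direction: the backtracking step size `τ` exists and satisfies
`2ρ(1-σ)γ/L ≤ τ ≤ 1`. -/
theorem stmt_7 {E : Type*} [NormedAddCommGroup E] [InnerProductSpace ℝ E]
    [FiniteDimensional ℝ E]
    (W : E → ℝ) (γ L : ℝ) (hγ : 0 < γ) (hγL : γ ≤ L)
    (hW : ContDiff ℝ 2 W)
    (hlow : ∀ x ξ : E, γ * ‖ξ‖ ^ 2 ≤ iteratedFDeriv ℝ 2 W x ![ξ, ξ])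
    (hup : ∀ x ξ : E, iteratedFDeriv ℝ 2 W x ![ξ, ξ] ≤ L * ‖ξ‖ ^ 2)
    (ρ σ : ℝ) (hρ0 : 0 < ρ) (hρ1 : ρ ≤ 1 / 2) (hσ0 : 0 < σ) (hσ1 : σ < 1 / 2)
    (a δ : E)
    (hδ : ∀ v : E, iteratedFDeriv ℝ 2 W a ![δ, v] = -⟪gradient W a, v⟫)
    (hδ0 : δ ≠ 0) :
    {k : ℕ | W (a + ρ ^ k • δ) ≤ W a + σ * ρ ^ k * ⟪gradient W a, δ⟫}.Nonempty ∧
    ∃ τ : ℝ,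
      IsGreatest {t : ℝ | ∃ k : ℕ, t = ρ ^ k ∧
        W (a + t • δ) ≤ W a + σ * t * ⟪gradient W a, δ⟫} τ ∧
      2 * ρ * (1 - σ) * γ / L ≤ τ ∧ τ ≤ 1 := by
  classical
  set g : ℝ := ⟪gradient W a, δ⟫ with hgdef
  have hL : 0 < L := lt_of_lt_of_le hγ hγL
  have hδn : 0 < ‖δ‖ := norm_pos_iff.mpr hδ0
  have hgle : g ≤ -(γ * ‖δ‖ ^ 2) := by
    have h1 := hlow a δ
    rw [hδ δ] at h1
    linarith
  have hg_eq : g = fderiv ℝ W a δ := by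
    rw [hgdef, gradient, InnerProductSpace.toDual_symm_apply]
  set tstar : ℝ := 2 * (1 - σ) * γ / L with htstar
  have htpos : 0 < tstar := by
    apply div_pos _ hL; nlinarith
  -- sufficient condition for Armijo
  have key : ∀ t : ℝ, 0 < t → t ≤ tstar → W (a + t • δ) ≤ W a + σ * t * g := by
    intro t ht htle
    have htay := taylor_upper W L hW a δ (fun x => hup x δ) ht.le
    rw [← hg_eq] at htay
    have htL : t * L ≤ 2 * (1 - σ) * γ := by
      rw [htstar, le_div_iff₀ hL] at htle; linarith
    have h1 : (1 - σ) * t * g ≤ (1 - σ) * t * (-(γ * ‖δ‖ ^ 2)) := by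
      apply mul_le_mul_of_nonneg_left hgle; nlinarith
    have h2 : L * ‖δ‖ ^ 2 * t ^ 2 / 2 ≤ (1 - σ) * t * (γ * ‖δ‖ ^ 2) := by
      nlinarith [mul_le_mul_of_nonneg_right htL (by positivity : (0:ℝ) ≤ t * ‖δ‖ ^ 2 / 2)]
    nlinarith
  -- the Armijo predicate on exponents
  set P : ℕ → Prop := fun k => W (a + ρ ^ k • δ) ≤ W a + σ * ρ ^ k * g with hP
  have hex : ∃ k, P k := by
    obtain ⟨k, hk⟩ := exists_pow_lt_of_lt_one htpos (by linarith : ρ < 1)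
    exact ⟨k, key _ (pow_pos hρ0 k) hk.le⟩
  refine ⟨hex, ρ ^ Nat.find hex, ⟨⟨Nat.find hex, rfl, Nat.find_spec hex⟩, ?_⟩, ?_, ?_⟩
  · rintro t ⟨k, rfl, hk⟩
    exact pow_le_pow_of_le_one hρ0.le (by linarith) (Nat.find_min' hex hk)
  · rcases Nat.eq_zero_or_eq_succ_pred (Nat.find hex) with h0 | hs
    · rw [h0, pow_zero, div_le_one hL]
      have h1σ : 0 < 1 - σ := by linarith
      have e1 : 2 * ρ * ((1 - σ) * γ) ≤ 1 * ((1 - σ) * γ) :=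
        mul_le_mul_of_nonneg_right (by linarith) (le_of_lt (mul_pos h1σ hγ))
      have e2 : (1 - σ) * γ ≤ 1 * γ :=
        mul_le_mul_of_nonneg_right (by linarith) hγ.le
      nlinarith
    · set k := (Nat.find hex) - 1 with hk
      have hnP : ¬ P k := Nat.find_min hex (by omega)
      have hgt : tstar < ρ ^ k := by
        by_contra hle
        exact hnP (key _ (pow_pos hρ0 k) (le_of_not_gt hle))
      calc 2 * ρ * (1 - σ) * γ / L = tstar * ρ := by rw [htstar]; ring
        _ ≤ ρ ^ k * ρ := mul_le_mul_of_nonneg_right hgt.le hρ0.le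
        _ = ρ ^ (Nat.find hex) := by
              rw [← pow_succ]
              congr 1
              omega
  · exact pow_le_one₀ hρ0.le (by linarith)
end

section
/- Let E be a finite-dimensional real inner product space and W : E → ℝ twice continuously differentiable with constants 0 < γ ≤ L such that γ‖ξ‖² ≤ D²W(x)[ξ, ξ] ≤ L‖ξ‖² for all x, ξ ∈ E. Let a* ∈ E be the unique point with ∇W(a*) = 0. For a ∈ E let δ be the Newton direction at a, and set ‖v‖_A := √(D²W(a)[v, v]). Then ‖δ‖_A ≥ (γ/√L)‖a − a*‖. -/
open scoped RealInnerProductSpace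

/-- Lower bound for the Newton direction in the energy norm `‖v‖_A = √(D²W(a)[v,v])`:
`‖δ‖_A ≥ (γ/√L)‖a - a*‖` where `a*` is the stationary point. -/
theorem stmt_8 {E : Type*} [NormedAddCommGroup E] [InnerProductSpace ℝ E]
    [FiniteDimensional ℝ E]
    (W : E → ℝ) (γ L : ℝ) (hγ : 0 < γ) (hγL : γ ≤ L)
    (hW : ContDiff ℝ 2 W)
    (hlow : ∀ x ξ : E, γ * ‖ξ‖ ^ 2 ≤ iteratedFDeriv ℝ 2 W x ![ξ, ξ])
    (hup : ∀ x ξ : E, iteratedFDeriv ℝ 2 W x ![ξ, ξ] ≤ L * ‖ξ‖ ^ 2)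
    (astar : E) (hstar : gradient W astar = 0)
    (a δ : E)
    (hδ : ∀ v : E, iteratedFDeriv ℝ 2 W a ![δ, v] = -⟪gradient W a, v⟫) :
    γ / Real.sqrt L * ‖a - astar‖ ≤ Real.sqrt (iteratedFDeriv ℝ 2 W a ![δ, δ]) := by
  have hL : (0:ℝ) < L := hγ.trans_le hγL
  set u := a - astar with hu
  rcases eq_or_ne u 0 with h0 | h0
  · rw [h0, norm_zero, mul_zero]
    exact Real.sqrt_nonneg _
  have hunorm : (0:ℝ) < ‖u‖ := norm_pos_iff.mpr h0
  have hgrad : ∀ x v : E, ⟪gradient W x, v⟫ = fderiv ℝ W x v := by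
    intro x v
    rw [gradient]
    exact InnerProductSpace.toDual_symm_apply
  have hWd : Differentiable ℝ W := hW.differentiable two_ne_zero
  have hW1 : ContDiff ℝ 1 (fderiv ℝ W) := (contDiff_succ_iff_fderiv.mp (by exact_mod_cast hW : ContDiff ℝ (1+1 : ℕ) W)).2.2
  have hW1d : Differentiable ℝ (fderiv ℝ W) := hW1.differentiable one_ne_zero
  set B : E → E → E → ℝ := fun x v w => fderiv ℝ (fderiv ℝ W) x v w with hB
  have hiter : ∀ x v w : E, iteratedFDeriv ℝ 2 W x ![v, w] = B x v w := by
    intro x v w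
    rw [iteratedFDeriv_two_apply]
    rfl
  have hBlow : ∀ x ξ : E, γ * ‖ξ‖ ^ 2 ≤ B x ξ ξ := by
    intro x ξ; rw [← hiter]; exact hlow x ξ
  have hBup : ∀ x ξ : E, B x ξ ξ ≤ L * ‖ξ‖ ^ 2 := by
    intro x ξ; rw [← hiter]; exact hup x ξ
  have hBsymm : ∀ x v w : E, B x v w = B x w v := by
    intro x v w
    exact second_derivative_symmetric (fun y => (hWd y).hasFDerivAt)
      ((hW1d x).hasFDerivAt) v w
  -- strong monotonicity of the gradient along the segment from `astar` to `a`
  have hmono : γ * ‖u‖ ^ 2 ≤ ⟪gradient W a, u⟫ := by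
    set g : ℝ → ℝ := fun t => fderiv ℝ W (astar + t • u) u with hg
    have hline : ∀ t : ℝ, HasDerivAt (fun s : ℝ => astar + s • u) u t := by
      intro t
      simpa using ((hasDerivAt_id t).smul_const u).const_add astar
    have hgderiv : ∀ t : ℝ, HasDerivAt g (B (astar + t • u) u u) t := by
      intro t
      have h1 : HasDerivAt (fun s : ℝ => fderiv ℝ W (astar + s • u))
          (fderiv ℝ (fderiv ℝ W) (astar + t • u) u) t :=
        ((hW1d (astar + t • u)).hasFDerivAt).comp_hasDerivAt t (hline t)
      exact (ContinuousLinearMap.apply ℝ ℝ u).hasFDerivAt.comp_hasDerivAt t h1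
    have hgdiff : Differentiable ℝ g := fun t => (hgderiv t).differentiableAt
    have hbound : ∀ t : ℝ, γ * ‖u‖ ^ 2 ≤ deriv g t := by
      intro t
      rw [(hgderiv t).deriv]
      exact hBlow _ u
    have hkey := mul_sub_le_image_sub_of_le_deriv hgdiff hbound (zero_le_one (α := ℝ))
    have h0' : g 0 = 0 := by
      have hg0 : g 0 = ⟪gradient W astar, u⟫ := by
        rw [hgrad]; simp [hg]
      rw [hg0, hstar, inner_zero_left]
    have h1' : g 1 = ⟪gradient W a, u⟫ := by
      rw [hgrad]; simp [hg, hu]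
    rw [h0', h1'] at hkey
    linarith
  have hpos : ∀ x : E, 0 ≤ B a x x := fun x => le_trans (by positivity) (hBlow a x)
  have hBδδ : 0 ≤ B a δ δ := hpos δ
  -- Cauchy–Schwarz for the bilinear form `B a`
  have hCS : (B a δ u) ^ 2 ≤ B a δ δ * B a u u := by
    have hquad : ∀ t : ℝ, 0 ≤ B a u u * (t * t) + (2 * B a δ u) * t + B a δ δ := by
      intro t
      have hsym : B a u δ = B a δ u := hBsymm a u δ
      have h1 : B a (δ + t • u) (δ + t • u)
          = B a u u * (t * t) + (2 * B a δ u) * t + B a δ δ := by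
        simp only [hB] at hsym ⊢
        simp only [map_add, map_smul, ContinuousLinearMap.add_apply,
          ContinuousLinearMap.smul_apply, smul_eq_mul]
        rw [hsym]; ring
      rw [← h1]; exact hpos _
    have hd := discrim_le_zero hquad
    rw [discrim] at hd
    nlinarith [hd]
  -- assemble
  have key : γ * ‖u‖ ^ 2 ≤ Real.sqrt (B a δ δ) * (Real.sqrt L * ‖u‖) := by
    have hδu : ⟪gradient W a, u⟫ = -(B a δ u) := by
      have h := hδ u
      rw [hiter] at h
      linarith
    calc γ * ‖u‖ ^ 2 ≤ ⟪gradient W a, u⟫ := hmono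
      _ = -(B a δ u) := hδu
      _ ≤ |B a δ u| := neg_le_abs _
      _ = Real.sqrt ((B a δ u) ^ 2) := (Real.sqrt_sq_eq_abs _).symm
      _ ≤ Real.sqrt (B a δ δ * B a u u) := Real.sqrt_le_sqrt hCS
      _ = Real.sqrt (B a δ δ) * Real.sqrt (B a u u) := Real.sqrt_mul hBδδ _
      _ ≤ Real.sqrt (B a δ δ) * Real.sqrt (L * ‖u‖ ^ 2) := by
          exact mul_le_mul_of_nonneg_left (Real.sqrt_le_sqrt (hBup a u))
            (Real.sqrt_nonneg _)
      _ = Real.sqrt (B a δ δ) * (Real.sqrt L * ‖u‖) := by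
          rw [Real.sqrt_mul hL.le, Real.sqrt_sq (norm_nonneg _)]
  have hsL : 0 < Real.sqrt L := Real.sqrt_pos.mpr hL
  rw [hiter, div_mul_eq_mul_div, div_le_iff₀ hsL]
  nlinarith [key, hunorm, Real.sqrt_nonneg (B a δ δ)]
end

section
/- Let E be a finite-dimensional real inner product space and W : E → ℝ twice continuously differentiable with constants 0 < γ ≤ L such that γ‖ξ‖² ≤ D²W(x)[ξ, ξ] ≤ L‖ξ‖² for all x, ξ ∈ E. Let a* ∈ E be the unique global minimizer of W. For a ∈ E let δ be the Newton direction at a. Then D²W(a)[δ, δ] ≥ (2γ²/L²)(W(a) − W(a*)). -/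
open scoped RealInnerProductSpace

section Aux

variable {E : Type*} [NormedAddCommGroup E] [InnerProductSpace ℝ E] [CompleteSpace E]

lemma aux_iter_two (W : E → ℝ) (x ξ η : E) :
    iteratedFDeriv ℝ 2 W x ![ξ, η] = fderiv ℝ (fderiv ℝ W) x ξ η := by
  rw [iteratedFDeriv_two_apply]
  simp

lemma aux_inner_grad {W : E → ℝ} (y v : E) :
    ⟪gradient W y, v⟫ = fderiv ℝ W y v :=
  InnerProductSpace.toDual_symm_apply

/-- Taylor-type lower bound from `D²W ≥ γ`. -/
lemma aux_taylor {W : E → ℝ} {γ : ℝ} (hγ : 0 < γ) (hW : ContDiff ℝ 2 W)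
    (hlow : ∀ x ξ : E, γ * ‖ξ‖ ^ 2 ≤ iteratedFDeriv ℝ 2 W x ![ξ, ξ])
    (x v : E) :
    W x + ⟪gradient W x, v⟫ + γ / 2 * ‖v‖ ^ 2 ≤ W (x + v) := by
  have hWd : Differentiable ℝ W := hW.differentiable (by norm_num)
  have hW1 : ContDiff ℝ 1 (fderiv ℝ W) := hW.fderiv_right (by norm_num)
  have hW1d : Differentiable ℝ (fderiv ℝ W) := hW1.differentiable one_ne_zero
  set c : ℝ → E := fun t => x + t • v with hc
  have hcder : ∀ t : ℝ, HasDerivAt c v t := fun t => by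
    exact (((hasDerivAt_id t).smul_const v).const_add x).congr_deriv (by simp)
  -- χ t = fderiv W (c t) v - γ‖v‖² t
  set χ : ℝ → ℝ := fun t => fderiv ℝ W (c t) v - γ * ‖v‖ ^ 2 * t with hχ
  have hχder : ∀ t : ℝ, HasDerivAt χ
      (fderiv ℝ (fderiv ℝ W) (c t) v v - γ * ‖v‖ ^ 2) t := by
    intro t
    have h1 : HasFDerivAt (fun y => fderiv ℝ W y v)
        ((ContinuousLinearMap.apply ℝ ℝ v).comp (fderiv ℝ (fderiv ℝ W) (c t))) (c t) :=
      (ContinuousLinearMap.apply ℝ ℝ v).hasFDerivAt.comp (c t) (hW1d (c t)).hasFDerivAt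
    have h2 : HasDerivAt (fun t => fderiv ℝ W (c t) v)
        (fderiv ℝ (fderiv ℝ W) (c t) v v) t := by
      have := h1.comp_hasDerivAt t (hcder t)
      exact this
    exact (h2.sub (((hasDerivAt_id t).const_mul (γ * ‖v‖ ^ 2)))).congr_deriv (by ring)
  have hχmono : Monotone χ := by
    apply monotone_of_deriv_nonneg
    · exact fun t => (hχder t).differentiableAt
    · intro t
      rw [(hχder t).deriv]
      have := hlow (c t) v
      rw [aux_iter_two] at this
      linarith
  -- ψ t = W (c t) - γ/2 ‖v‖² t²
  set ψ : ℝ → ℝ := fun t => W (c t) - γ / 2 * ‖v‖ ^ 2 * t ^ 2 with hψ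
  have hψder : ∀ t : ℝ, HasDerivAt ψ (χ t) t := by
    intro t
    have h1 : HasDerivAt (fun t => W (c t)) (fderiv ℝ W (c t) v) t := by
      have := (hWd (c t)).hasFDerivAt.comp_hasDerivAt t (hcder t)
      exact this
    have h2 : HasDerivAt (fun t : ℝ => γ / 2 * ‖v‖ ^ 2 * t ^ 2)
        (γ / 2 * ‖v‖ ^ 2 * (2 * t)) t := by
      simpa using ((hasDerivAt_pow 2 t).const_mul (γ / 2 * ‖v‖ ^ 2))
    have := h1.sub h2
    refine this.congr_deriv ?_
    simp only [hχ]
    ring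
  obtain ⟨t₀, ht₀, hslope⟩ := exists_hasDerivAt_eq_slope ψ χ (by norm_num : (0:ℝ) < 1)
    (fun t _ => (hψder t).continuousAt.continuousWithinAt)
    (fun t _ => hψder t)
  have hmono := hχmono (le_of_lt ht₀.1)
  have hχ0 : χ 0 = ⟪gradient W x, v⟫ := by
    simp [hχ, hc, aux_inner_grad]
  have hψ1 : ψ 1 = W (x + v) - γ / 2 * ‖v‖ ^ 2 := by simp [hψ, hc]
  have hψ0 : ψ 0 = W x := by simp [hψ, hc]
  rw [hχ0] at hmono
  rw [hψ1, hψ0] at hslope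
  have : ⟪gradient W x, v⟫ ≤ W (x + v) - γ / 2 * ‖v‖ ^ 2 - W x := by
    calc ⟪gradient W x, v⟫ ≤ χ t₀ := hmono
    _ = W (x + v) - γ / 2 * ‖v‖ ^ 2 - W x := by rw [hslope]; ring
  linarith

end Aux


lemma aux_arith (γ L d G p q r : ℝ) (hγ : 0 < γ) (hγL : γ ≤ L) (hd0 : 0 ≤ d)
    (hkey1 : 2 * γ * d ≤ G ^ 2) (hG0 : 0 ≤ G) (hqv : q = -G ^ 2)
    (hp : p ≤ L * G ^ 2) (hr : 0 ≤ r) (hdisc : (2 * q) ^ 2 - 4 * p * r ≤ 0) :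
    2 * γ ^ 2 / L ^ 2 * d ≤ r := by
  have hL : 0 < L := lt_of_lt_of_le hγ hγL
  have h1 : G ^ 4 ≤ p * r := by nlinarith [hdisc, hqv]
  have key2 : G ^ 4 ≤ L * G ^ 2 * r := by nlinarith [mul_le_mul_of_nonneg_right hp hr]
  rcases eq_or_lt_of_le hG0 with hG | hG
  · have hd : d ≤ 0 := by nlinarith [hkey1]
    have hc : 0 ≤ 2 * γ ^ 2 / L ^ 2 := by positivity
    nlinarith [mul_nonpos_of_nonneg_of_nonpos hc hd]
  · have hG2 : 0 < G ^ 2 := by positivity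
    have h3 : G ^ 2 ≤ L * r := by nlinarith [key2]
    rw [div_mul_eq_mul_div, div_le_iff₀ (by positivity : (0:ℝ) < L ^ 2)]
    nlinarith [hkey1, h3, hd0]

/-- Lower bound for the squared energy norm of the Newton direction in terms of the
energy distance to the minimum: `D²W(a)[δ,δ] ≥ (2γ²/L²)(W(a) - W(a*))`. -/
theorem stmt_9 {E : Type*} [NormedAddCommGroup E] [InnerProductSpace ℝ E]
    [FiniteDimensional ℝ E]
    (W : E → ℝ) (γ L : ℝ) (hγ : 0 < γ) (hγL : γ ≤ L)
    (hW : ContDiff ℝ 2 W)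
    (hlow : ∀ x ξ : E, γ * ‖ξ‖ ^ 2 ≤ iteratedFDeriv ℝ 2 W x ![ξ, ξ])
    (hup : ∀ x ξ : E, iteratedFDeriv ℝ 2 W x ![ξ, ξ] ≤ L * ‖ξ‖ ^ 2)
    (astar : E) (hmin : ∀ x : E, W astar ≤ W x)
    (a δ : E)
    (hδ : ∀ v : E, iteratedFDeriv ℝ 2 W a ![δ, v] = -⟪gradient W a, v⟫) :
    2 * γ ^ 2 / L ^ 2 * (W a - W astar) ≤ iteratedFDeriv ℝ 2 W a ![δ, δ] := by
  have hL : 0 < L := lt_of_lt_of_le hγ hγL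
  set g : E := gradient W a with hg
  set B : E →L[ℝ] E →L[ℝ] ℝ := fderiv ℝ (fderiv ℝ W) a with hB
  have hiter : ∀ ξ η : E, iteratedFDeriv ℝ 2 W a ![ξ, η] = B ξ η := fun ξ η =>
    aux_iter_two W a ξ η
  have hsym : ∀ v w : E, B v w = B w v :=
    hW.contDiffAt.isSymmSndFDerivAt (by simp [minSmoothness_of_isRCLikeNormedField])
  have hBlow : ∀ ξ : E, γ * ‖ξ‖ ^ 2 ≤ B ξ ξ := fun ξ => by
    rw [← hiter]; exact hlow a ξ
  have hBup : ∀ ξ : E, B ξ ξ ≤ L * ‖ξ‖ ^ 2 := fun ξ => by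
    rw [← hiter]; exact hup a ξ
  have hBpos : ∀ ξ : E, (0:ℝ) ≤ B ξ ξ := fun ξ =>
    le_trans (by positivity) (hBlow ξ)
  have hδB : ∀ v : E, B δ v = -⟪g, v⟫ := fun v => by
    rw [← hiter]; exact hδ v
  -- key1 : energy distance bound
  have hd0 : 0 ≤ W a - W astar := by linarith [hmin a]
  have key1 : 2 * γ * (W a - W astar) ≤ ‖g‖ ^ 2 := by
    have ht := aux_taylor hγ hW hlow a (astar - a)
    rw [add_sub_cancel] at ht
    have hip : -(‖g‖ * ‖astar - a‖) ≤ ⟪g, astar - a⟫ :=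
      le_trans (neg_le_neg (abs_real_inner_le_norm g (astar - a)))
        (neg_abs_le _)
    nlinarith [sq_nonneg (γ * ‖astar - a‖ - ‖g‖), hγ, ht, hip]
  -- key2 : ‖g‖⁴ ≤ L ‖g‖² B δ δ  via Cauchy–Schwarz for B
  have hδg : B δ g = -‖g‖ ^ 2 := by
    rw [hδB g, real_inner_self_eq_norm_sq]
  have hquad : ∀ t : ℝ, 0 ≤ B g g * (t * t) + (2 * B δ g) * t + B δ δ := by
    intro t
    have h := hBpos (δ + t • g)
    have hexp : B (δ + t • g) (δ + t • g)
        = B g g * (t * t) + (2 * B δ g) * t + B δ δ := by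
      simp only [map_add, map_smul, ContinuousLinearMap.add_apply,
        ContinuousLinearMap.smul_apply, smul_eq_mul]
      rw [hsym g δ]
      ring
    rwa [hexp] at h
  obtain ⟨p, hp⟩ : ∃ p : ℝ, B g g = p := ⟨_, rfl⟩
  obtain ⟨q, hq⟩ : ∃ q : ℝ, B δ g = q := ⟨_, rfl⟩
  obtain ⟨r, hr⟩ : ∃ r : ℝ, B δ δ = r := ⟨_, rfl⟩
  have hquad' : ∀ t : ℝ, 0 ≤ p * (t * t) + (2 * q) * t + r := by
    intro t; rw [← hp, ← hq, ← hr]; exact hquad t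
  have hdisc := discrim_le_zero hquad'
  rw [discrim] at hdisc
  have hqval : q = -‖g‖ ^ 2 := by rw [← hq, hδg]
  have hpup : p ≤ L * ‖g‖ ^ 2 := by rw [← hp]; exact hBup g
  have hr0 : (0:ℝ) ≤ r := by rw [← hr]; exact hBpos δ
  rw [hiter δ δ, hr]
  exact aux_arith γ L (W a - W astar) ‖g‖ p q r hγ hγL hd0 key1 (norm_nonneg g)
    hqval hpup hr0 hdisc
end

section
/- Let E be a finite-dimensional real inner product space and W : E → ℝ twice continuously differentiable with constants 0 < γ ≤ L such that γ‖ξ‖² ≤ D²W(x)[ξ, ξ] ≤ L‖ξ‖² for all x, ξ ∈ E. Let a* be the unique global minimizer of W, let a ∈ E, let δ be the Newton direction at a, let σ ∈ (0, 1/2), and suppose τ ∈ (0, 1] satisfies the Armijo condition W(a + τδ) ≤ W(a) + στ⟨∇W(a), δ⟩. Then W(a + τδ) − W(a*) ≤ (1 − 2στγ²/L²)(W(a) − W(a*)). -/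
open scoped RealInnerProductSpace

private lemma taylor_lower_aux {E : Type*} [NormedAddCommGroup E] [InnerProductSpace ℝ E]
    (W : E → ℝ) (γ : ℝ) (hW : ContDiff ℝ 2 W)
    (hlow : ∀ x ξ : E, γ * ‖ξ‖ ^ 2 ≤ iteratedFDeriv ℝ 2 W x ![ξ, ξ])
    (x v : E) :
    W x + fderiv ℝ W x v + γ / 2 * ‖v‖ ^ 2 ≤ W (x + v) := by
  have hdiff : Differentiable ℝ W := hW.differentiable two_ne_zero
  have hF : ContDiff ℝ 1 (fderiv ℝ W) := by
    have h := (contDiff_succ_iff_fderiv (n := 1)).mp (by exact_mod_cast hW)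
    exact h.2.2
  have hFd : Differentiable ℝ (fderiv ℝ W) := hF.differentiable one_ne_zero
  have line : ∀ t : ℝ, HasDerivAt (fun s : ℝ => x + s • v) v t := fun t => by
    simpa using ((hasDerivAt_id t).smul_const v).const_add x
  set D : ℝ → ℝ := fun t => fderiv ℝ W (x + t • v) v with hDdef
  have hφ : ∀ t : ℝ, HasDerivAt (fun s => W (x + s • v)) (D t) t := fun t =>
    (hdiff _).hasFDerivAt.comp_hasDerivAt t (line t)
  have hD' : ∀ t : ℝ, HasDerivAt D (iteratedFDeriv ℝ 2 W (x + t • v) ![v, v]) t := by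
    intro t
    have h3 : HasDerivAt (fun s => fderiv ℝ W (x + s • v))
        (fderiv ℝ (fderiv ℝ W) (x + t • v) v) t :=
      (hFd _).hasFDerivAt.comp_hasDerivAt t (line t)
    have h4 := h3.clm_apply (hasDerivAt_const t v)
    simpa [iteratedFDeriv_two_apply] using h4
  -- χ is monotone
  have hχ : ∀ t : ℝ, HasDerivAt (fun s => D s - γ * ‖v‖ ^ 2 * s)
      (iteratedFDeriv ℝ 2 W (x + t • v) ![v, v] - γ * ‖v‖ ^ 2) t := by
    intro t
    have := (hD' t).sub (((hasDerivAt_id t).const_mul (γ * ‖v‖ ^ 2)))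
    simp only [mul_one] at this
    exact this
  have hχmono : Monotone (fun s => D s - γ * ‖v‖ ^ 2 * s) :=
    monotone_of_hasDerivAt_nonneg hχ (fun t => sub_nonneg.2 (hlow _ v))
  have hDlb : ∀ t : ℝ, 0 ≤ t → D 0 + γ * ‖v‖ ^ 2 * t ≤ D t := by
    intro t ht
    have := hχmono ht
    simp only [mul_zero, sub_zero] at this
    linarith
  -- ψ is monotone on [0, ∞)
  set ψ : ℝ → ℝ := fun t => W (x + t • v) - D 0 * t - γ / 2 * ‖v‖ ^ 2 * t ^ 2 with hψdef
  have hψ : ∀ t : ℝ, HasDerivAt ψ (D t - D 0 - γ * ‖v‖ ^ 2 * t) t := by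
    intro t
    have h1 := ((hφ t).sub ((hasDerivAt_id t).const_mul (D 0))).sub
      ((hasDerivAt_pow 2 t).const_mul (γ / 2 * ‖v‖ ^ 2))
    refine h1.congr_deriv ?_
    ring
  have hψmono : MonotoneOn ψ (Set.Ici (0 : ℝ)) := by
    apply monotoneOn_of_hasDerivWithinAt_nonneg (f' := fun t => D t - D 0 - γ * ‖v‖ ^ 2 * t)
      (convex_Ici 0)
    · exact fun t _ => (hψ t).continuousAt.continuousWithinAt
    · exact fun t _ => (hψ t).hasDerivWithinAt
    · intro t ht
      rw [interior_Ici] at ht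
      have := hDlb t (le_of_lt ht)
      linarith
  have h01 := hψmono (Set.self_mem_Ici) (Set.mem_Ici.2 (zero_le_one)) zero_le_one
  have hD0 : D 0 = fderiv ℝ W x v := by simp [hDdef]
  simp only [hψdef, zero_smul, add_zero, one_smul, mul_zero, mul_one, one_pow, sub_zero,
    zero_pow, hD0] at h01
  linarith

set_option maxHeartbeats 1000000 in
/-- One step of the damped Newton method with an Armijo step size contracts the energy
distance to the minimum by the factor `1 - 2στγ²/L²`. -/
theorem stmt_10 {E : Type*} [NormedAddCommGroup E] [InnerProductSpace ℝ E]
    [FiniteDimensional ℝ E]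
    (W : E → ℝ) (γ L : ℝ) (hγ : 0 < γ) (hγL : γ ≤ L)
    (hW : ContDiff ℝ 2 W)
    (hlow : ∀ x ξ : E, γ * ‖ξ‖ ^ 2 ≤ iteratedFDeriv ℝ 2 W x ![ξ, ξ])
    (hup : ∀ x ξ : E, iteratedFDeriv ℝ 2 W x ![ξ, ξ] ≤ L * ‖ξ‖ ^ 2)
    (astar : E) (hmin : ∀ x : E, W astar ≤ W x)
    (a δ : E)
    (hδ : ∀ v : E, iteratedFDeriv ℝ 2 W a ![δ, v] = -⟪gradient W a, v⟫)
    (σ : ℝ) (hσ0 : 0 < σ) (hσ1 : σ < 1 / 2)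
    (τ : ℝ) (hτ0 : 0 < τ) (hτ1 : τ ≤ 1)
    (harmijo : W (a + τ • δ) ≤ W a + σ * τ * ⟪gradient W a, δ⟫) :
    W (a + τ • δ) - W astar ≤ (1 - 2 * σ * τ * γ ^ 2 / L ^ 2) * (W a - W astar) := by
  have hL : 0 < L := lt_of_lt_of_le hγ hγL
  have hdiff : Differentiable ℝ W := hW.differentiable two_ne_zero
  have hF : ContDiff ℝ 1 (fderiv ℝ W) := by
    have h := (contDiff_succ_iff_fderiv (n := 1)).mp (by exact_mod_cast hW)
    exact h.2.2
  have hFd : Differentiable ℝ (fderiv ℝ W) := hF.differentiable one_ne_zero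
  set g : E := gradient W a with hgdef
  have hgrad : ∀ v : E, fderiv ℝ W a v = ⟪g, v⟫ := by
    intro v
    rw [hgdef, gradient, InnerProductSpace.toDual_symm_apply]
  set B : E →L[ℝ] E →L[ℝ] ℝ := fderiv ℝ (fderiv ℝ W) a with hBdef
  have hsymm : ∀ v w : E, B v w = B w v :=
    second_derivative_symmetric (fun y => (hdiff y).hasFDerivAt) (hFd a).hasFDerivAt
  have hBit : ∀ v w : E, iteratedFDeriv ℝ 2 W a ![v, w] = B v w := by
    intro v w
    rw [iteratedFDeriv_two_apply]
    simp [hBdef]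
  have hBlow : ∀ ξ : E, γ * ‖ξ‖ ^ 2 ≤ B ξ ξ := fun ξ => (hBit ξ ξ) ▸ hlow a ξ
  have hBup : ∀ ξ : E, B ξ ξ ≤ L * ‖ξ‖ ^ 2 := fun ξ => (hBit ξ ξ) ▸ hup a ξ
  have hBnn : ∀ ξ : E, 0 ≤ B ξ ξ := fun ξ => le_trans (by positivity) (hBlow ξ)
  -- Cauchy–Schwarz for B
  have hCS : ∀ v w : E, (B v w) ^ 2 ≤ B v v * B w w := by
    intro v w
    have hq : ∀ t : ℝ, 0 ≤ B v v * (t * t) + (2 * B v w) * t + B w w := by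
      intro t
      have h0 : 0 ≤ B (t • v + w) (t • v + w) := hBnn _
      have hexp : B (t • v + w) (t • v + w)
          = B v v * (t * t) + (2 * B v w) * t + B w w := by
        have hwv := hsymm w v
        simp only [map_add, map_smul, ContinuousLinearMap.add_apply,
          ContinuousLinearMap.coe_smul', Pi.smul_apply, smul_eq_mul]
        rw [hwv]; ring
      linarith [hexp ▸ h0]
    have hd := discrim_le_zero hq
    rw [discrim] at hd
    nlinarith [hd]
  have hBδg : B δ g = -‖g‖ ^ 2 := by
    have h := hδ g
    rw [hBit] at h
    rw [h, real_inner_self_eq_norm_sq]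
  have hBδδ : B δ δ = -⟪g, δ⟫ := by
    have h := hδ δ
    rwa [hBit] at h
  -- ‖g‖² ≤ L * B δ δ
  have hkey : ‖g‖ ^ 2 ≤ L * B δ δ := by
    have h1 : (B δ g) ^ 2 ≤ B δ δ * B g g := hCS δ g
    rw [hBδg] at h1
    have h2 : B g g ≤ L * ‖g‖ ^ 2 := hBup g
    have h3 : 0 ≤ B δ δ := hBnn δ
    rcases eq_or_lt_of_le (norm_nonneg g) with hg | hg
    · have hg0 : ‖g‖ = 0 := hg.symm
      rw [hg0]
      simpa using mul_nonneg hL.le h3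
    · have hgpos : 0 < ‖g‖ ^ 2 := by positivity
      have h4 : ‖g‖ ^ 2 * ‖g‖ ^ 2 ≤ (L * B δ δ) * ‖g‖ ^ 2 := by
        calc ‖g‖ ^ 2 * ‖g‖ ^ 2 = (-‖g‖ ^ 2) ^ 2 := by ring
          _ ≤ B δ δ * B g g := h1
          _ ≤ B δ δ * (L * ‖g‖ ^ 2) := mul_le_mul_of_nonneg_left h2 h3
          _ = (L * B δ δ) * ‖g‖ ^ 2 := by ring
      exact le_of_mul_le_mul_right h4 hgpos
  -- Polyak–Łojasiewicz
  have hPL : 2 * γ * (W a - W astar) ≤ ‖g‖ ^ 2 := by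
    have ht := taylor_lower_aux W γ hW hlow a (astar - a)
    have hxx : a + (astar - a) = astar := by abel
    rw [hxx, hgrad] at ht
    set u : E := astar - a
    have hq : (0 : ℝ) ≤ ‖g + γ • u‖ ^ 2 := sq_nonneg _
    rw [norm_add_sq_real, real_inner_smul_right, norm_smul, Real.norm_eq_abs,
      abs_of_pos hγ, mul_pow] at hq
    have ht2 := mul_le_mul_of_nonneg_left ht hγ.le
    nlinarith [hq, ht2]
  have hΔ : 0 ≤ W a - W astar := sub_nonneg.2 (hmin a)
  have hLip : L * ⟪g, δ⟫ ≤ -(2 * γ * (W a - W astar)) := by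
    have h := hkey
    rw [hBδδ] at h
    linarith [hPL, h]
  have h6 : γ ^ 2 * (W a - W astar) ≤ γ * L * (W a - W astar) := by
    nlinarith [mul_nonneg (mul_nonneg (sub_nonneg.2 hγL) hγ.le) hΔ]
  have h5 : σ * τ * L * (L * ⟪g, δ⟫) ≤ σ * τ * L * (-(2 * γ * (W a - W astar))) :=
    mul_le_mul_of_nonneg_left hLip (by positivity)
  have h7 : σ * τ * ⟪g, δ⟫ ≤ -(2 * σ * τ * γ ^ 2 * (W a - W astar)) / L ^ 2 := by
    rw [le_div_iff₀ (by positivity : (0 : ℝ) < L ^ 2)]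
    have h8 := mul_le_mul_of_nonneg_left h6 (by positivity : (0:ℝ) ≤ 2 * (σ * τ))
    nlinarith [h5, h8]
  calc W (a + τ • δ) - W astar ≤ (W a - W astar) + σ * τ * ⟪g, δ⟫ := by linarith [harmijo]
    _ ≤ (W a - W astar) + -(2 * σ * τ * γ ^ 2 * (W a - W astar)) / L ^ 2 := by linarith
    _ = (1 - 2 * σ * τ * γ ^ 2 / L ^ 2) * (W a - W astar) := by ring
end

section
/- Let E be a finite-dimensional real inner product space and W : E → ℝ twice continuously differentiable with constants 0 < γ ≤ L such that γ‖ξ‖² ≤ D²W(x)[ξ, ξ] ≤ L‖ξ‖² for all x, ξ ∈ E. Let a* be the unique global minimizer of W. Fix 0 < ρ ≤ 1/2 and 0 < σ < 1/2, and define a sequence (aⁿ) by: a⁰ ∈ E given; if the Newton direction δⁿ at aⁿ is zero set aⁿ⁺¹ = aⁿ, otherwise aⁿ⁺¹ = aⁿ + τⁿδⁿ where τⁿ is the backtracking step size. Then: (i) if the Newton direction δⁿ at aⁿ vanishes for some n, then aⁿ = a*; (ii) for all n ≥ 0, ‖aⁿ − a*‖² ≤ (L/γ) qⁿ ‖a⁰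 − a*‖², with q = 1 − 4ρσ(1 − σ)γ³/L³ < 1. In particular the iterates converge r-linearly to a* at a rate independent of everything except γ, L, ρ, σ. -/
open scoped RealInnerProductSpace

/-- Quadratic upper bound from a bound on the second derivative. -/
lemma quadUB_aux {E : Type*} [NormedAddCommGroup E] [InnerProductSpace ℝ E]
    (f : E → ℝ) (hf : ContDiff ℝ 2 f) (c : ℝ)
    (hc : ∀ y ξ, fderiv ℝ (fderiv ℝ f) y ξ ξ ≤ c * ‖ξ‖ ^ 2) (x v : E) :
    f (x + v) ≤ f x + fderiv ℝ f x v + c / 2 * ‖v‖ ^ 2 := by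
  have hf1 : ContDiff ℝ 1 (fderiv ℝ f) := hf.fderiv_right (by norm_num)
  have hdiff : Differentiable ℝ f := hf.differentiable (by norm_num)
  have hline : ∀ t : ℝ, HasDerivAt (fun s : ℝ => x + s • v) v t := by
    intro t
    simpa using ((hasDerivAt_id t).smul_const v).const_add x
  -- first derivative of g t = f (x + t v)
  have hg : ∀ t : ℝ, HasDerivAt (fun s : ℝ => f (x + s • v))
      (fderiv ℝ f (x + t • v) v) t := by
    intro t
    exact (hdiff (x + t • v)).hasFDerivAt.comp_hasDerivAt t (hline t)
  -- second derivative
  have hg' : ∀ t : ℝ, HasDerivAt (fun s : ℝ => fderiv ℝ f (x + s • v) v)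
      (fderiv ℝ (fderiv ℝ f) (x + t • v) v v) t := by
    intro t
    have h1 : HasDerivAt (fun s : ℝ => fderiv ℝ f (x + s • v))
        (fderiv ℝ (fderiv ℝ f) (x + t • v) v) t :=
      ((hf1.differentiable (by norm_num)) (x + t • v)).hasFDerivAt.comp_hasDerivAt t (hline t)
    simpa using h1.clm_apply (hasDerivAt_const t v)
  -- φ t = quadratic model minus g
  set φ : ℝ → ℝ := fun t => f x + t * fderiv ℝ f x v + c * t ^ 2 / 2 * ‖v‖ ^ 2
      - f (x + t • v) with hφdef
  have hφ' : ∀ t : ℝ, HasDerivAt φ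
      (fderiv ℝ f x v + c * t * ‖v‖ ^ 2 - fderiv ℝ f (x + t • v) v) t := by
    intro t
    have h1 : HasDerivAt (fun t : ℝ => f x + t * fderiv ℝ f x v + c * t ^ 2 / 2 * ‖v‖ ^ 2)
        (fderiv ℝ f x v + c * t * ‖v‖ ^ 2) t := by
      have ha : HasDerivAt (fun t : ℝ => t * fderiv ℝ f x v) (fderiv ℝ f x v) t := by
        simpa using (hasDerivAt_id t).mul_const (fderiv ℝ f x v)
      have hb : HasDerivAt (fun t : ℝ => c * t ^ 2 / 2 * ‖v‖ ^ 2)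
          (c * t * ‖v‖ ^ 2) t := by
        have : HasDerivAt (fun t : ℝ => t ^ 2) (2 * t) t := by
          simpa using hasDerivAt_pow 2 t
        have := ((this.const_mul c).div_const 2).mul_const (‖v‖ ^ 2)
        exact this.congr_deriv (by ring)
      exact (ha.const_add (f x)).add hb
    exact h1.sub (hg t)
  -- φ' has nonneg derivative, φ'(0) = 0
  set ψ : ℝ → ℝ := fun t => fderiv ℝ f x v + c * t * ‖v‖ ^ 2 - fderiv ℝ f (x + t • v) v
      with hψdef
  have hψ' : ∀ t : ℝ, HasDerivAt ψ
      (c * ‖v‖ ^ 2 - fderiv ℝ (fderiv ℝ f) (x + t • v) v v) t := by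
    intro t
    have h2 : HasDerivAt (fun t : ℝ => fderiv ℝ f x v + c * t * ‖v‖ ^ 2)
        (c * ‖v‖ ^ 2) t := by
      have : HasDerivAt (fun t : ℝ => c * t * ‖v‖ ^ 2) (c * ‖v‖ ^ 2) t := by
        simpa [mul_comm, mul_assoc] using
          (((hasDerivAt_id t).const_mul c).mul_const (‖v‖ ^ 2))
      simpa using this.const_add (fderiv ℝ f x v)
    exact h2.sub (hg' t)
  have hψmono : MonotoneOn ψ (Set.Icc (0:ℝ) 1) := by
    apply monotoneOn_of_deriv_nonneg (convex_Icc 0 1)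
    · exact fun t _ => (hψ' t).differentiableAt.continuousAt.continuousWithinAt
    · intro t ht
      exact (hψ' t).differentiableAt.differentiableWithinAt
    · intro t ht
      rw [(hψ' t).deriv]
      have := hc (x + t • v) v
      linarith
  have hψ0 : ψ 0 = 0 := by simp [hψdef]
  have hψnonneg : ∀ t ∈ Set.Icc (0:ℝ) 1, 0 ≤ ψ t := by
    intro t ht
    have := hψmono (Set.left_mem_Icc.2 one_pos.le) ht ht.1
    simpa [hψ0] using this
  have hφmono : MonotoneOn φ (Set.Icc (0:ℝ) 1) := by
    apply monotoneOn_of_deriv_nonneg (convex_Icc 0 1)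
    · exact fun t _ => (hφ' t).differentiableAt.continuousAt.continuousWithinAt
    · intro t ht
      exact (hφ' t).differentiableAt.differentiableWithinAt
    · intro t ht
      rw [(hφ' t).deriv]
      have ht' : t ∈ Set.Ioo (0:ℝ) 1 := by rwa [interior_Icc] at ht
      exact hψnonneg t (Set.mem_Icc_of_Ioo ht')
  have hφ0 : φ 0 = 0 := by simp [hφdef]
  have hφ1 : 0 ≤ φ 1 := by
    have := hφmono (Set.left_mem_Icc.2 one_pos.le) (Set.right_mem_Icc.2 one_pos.le)
      zero_le_one
    simpa [hφ0] using this
  have heq : φ 1 = f x + fderiv ℝ f x v + c / 2 * ‖v‖ ^ 2 - f (x + v) := by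
    simp only [hφdef, one_smul, one_pow, one_mul]
    ring
  rw [heq] at hφ1
  linarith

/-- Quadratic lower bound. -/
lemma quadLB_aux {E : Type*} [NormedAddCommGroup E] [InnerProductSpace ℝ E]
    (f : E → ℝ) (hf : ContDiff ℝ 2 f) (c : ℝ)
    (hc : ∀ y ξ, c * ‖ξ‖ ^ 2 ≤ fderiv ℝ (fderiv ℝ f) y ξ ξ) (x v : E) :
    f x + fderiv ℝ f x v + c / 2 * ‖v‖ ^ 2 ≤ f (x + v) := by
  have h1 : fderiv ℝ (fun y => -f y) = fun y => -fderiv ℝ f y := by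
    funext y; exact fderiv_neg
  have h2 : ∀ y ξ, fderiv ℝ (fderiv ℝ (fun y => -f y)) y ξ ξ ≤ (-c) * ‖ξ‖ ^ 2 := by
    intro y ξ
    rw [h1]
    have h3 : fderiv ℝ (fun y => -fderiv ℝ f y) y = -fderiv ℝ (fderiv ℝ f) y := fderiv_neg
    rw [h3]
    simp only [ContinuousLinearMap.neg_apply]
    have := hc y ξ
    linarith
  have := quadUB_aux (fun y => -f y) hf.neg (-c) h2 x v
  rw [h1] at this
  simp only [ContinuousLinearMap.neg_apply] at this
  linarith

set_option maxHeartbeats 2000000 in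
/-- Global r-linear convergence of the damped Newton iteration with Armijo backtracking:
if a Newton direction vanishes the iterate equals the minimizer, and
`‖aⁿ - a*‖² ≤ (L/γ) qⁿ ‖a⁰ - a*‖²` with `q = 1 - 4ρσ(1-σ)γ³/L³ < 1`. -/
theorem stmt_12 {E : Type*} [NormedAddCommGroup E] [InnerProductSpace ℝ E]
    [FiniteDimensional ℝ E]
    (W : E → ℝ) (γ L : ℝ) (hγ : 0 < γ) (hγL : γ ≤ L)
    (hW : ContDiff ℝ 2 W)
    (hlow : ∀ x ξ : E, γ * ‖ξ‖ ^ 2 ≤ iteratedFDeriv ℝ 2 W x ![ξ, ξ])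
    (hup : ∀ x ξ : E, iteratedFDeriv ℝ 2 W x ![ξ, ξ] ≤ L * ‖ξ‖ ^ 2)
    (astar : E) (hmin : ∀ x : E, W astar ≤ W x)
    (ρ σ : ℝ) (hρ0 : 0 < ρ) (hρ1 : ρ ≤ 1 / 2) (hσ0 : 0 < σ) (hσ1 : σ < 1 / 2)
    (a : ℕ → E) (δ : ℕ → E) (τ : ℕ → ℝ)
    (hδ : ∀ n, ∀ v : E, iteratedFDeriv ℝ 2 W (a n) ![δ n, v] = -⟪gradient W (a n), v⟫)
    (hstep0 : ∀ n, δ n = 0 → a (n + 1) = a n)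
    (hstep : ∀ n, δ n ≠ 0 →
      IsGreatest {t : ℝ | ∃ k : ℕ, t = ρ ^ k ∧
        W (a n + t • δ n) ≤ W (a n) + σ * t * ⟪gradient W (a n), δ n⟫} (τ n) ∧
      a (n + 1) = a n + τ n • δ n) :
    (∀ n : ℕ, δ n = 0 → a n = astar) ∧
    1 - 4 * ρ * σ * (1 - σ) * γ ^ 3 / L ^ 3 < 1 ∧
    ∀ n : ℕ, ‖a n - astar‖ ^ 2 ≤
      L / γ * (1 - 4 * ρ * σ * (1 - σ) * γ ^ 3 / L ^ 3) ^ n * ‖a 0 - astar‖ ^ 2 := by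
  classical
  have hL : 0 < L := lt_of_lt_of_le hγ hγL
  have h1σ : 0 < 1 - σ := by linarith
  have hB2 : ∀ x ξ η : E, iteratedFDeriv ℝ 2 W x ![ξ, η] = fderiv ℝ (fderiv ℝ W) x ξ η := by
    intro x ξ η
    rw [iteratedFDeriv_two_apply]
    simp
  have hlowB : ∀ x ξ : E, γ * ‖ξ‖ ^ 2 ≤ fderiv ℝ (fderiv ℝ W) x ξ ξ := by
    intro x ξ; rw [← hB2]; exact hlow x ξ
  have hupB : ∀ x ξ : E, fderiv ℝ (fderiv ℝ W) x ξ ξ ≤ L * ‖ξ‖ ^ 2 := by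
    intro x ξ; rw [← hB2]; exact hup x ξ
  have hsym : ∀ x ξ η : E, fderiv ℝ (fderiv ℝ W) x ξ η = fderiv ℝ (fderiv ℝ W) x η ξ := by
    intro x ξ η
    exact second_derivative_symmetric
      (fun y => (hW.differentiable (by norm_num) y).hasFDerivAt)
      (((hW.fderiv_right (m := 1) (by norm_num)).differentiable (by norm_num) x).hasFDerivAt) ξ η
  have hgradf : ∀ (x v : E), ⟪gradient W x, v⟫ = fderiv ℝ W x v := by
    intro x v
    exact InnerProductSpace.toDual_symm_apply
  have hub : ∀ x v : E, W (x + v) ≤ W x + ⟪gradient W x, v⟫ + L / 2 * ‖v‖ ^ 2 := by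
    intro x v
    rw [hgradf]
    exact quadUB_aux W hW L hupB x v
  have hlb : ∀ x v : E, W x + ⟪gradient W x, v⟫ + γ / 2 * ‖v‖ ^ 2 ≤ W (x + v) := by
    intro x v
    rw [hgradf]
    exact quadLB_aux W hW γ hlowB x v
  have hgrad0 : gradient W astar = 0 := by
    have hloc : IsLocalMin W astar := Filter.Eventually.of_forall hmin
    have : fderiv ℝ W astar = 0 := hloc.fderiv_eq_zero
    simp [gradient, this]
  have hgrow : ∀ x : E, γ / 2 * ‖x - astar‖ ^ 2 ≤ W x - W astar := by
    intro x
    have := hlb astar (x - astar)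
    rw [hgrad0] at this
    simp at this
    linarith
  have hgrowU : ∀ x : E, W x - W astar ≤ L / 2 * ‖x - astar‖ ^ 2 := by
    intro x
    have := hub astar (x - astar)
    rw [hgrad0] at this
    simp at this
    linarith
  have hPL : ∀ x : E, 2 * γ * (W x - W astar) ≤ ‖gradient W x‖ ^ 2 := by
    intro x
    have h1 := hlb x (astar - x)
    rw [show x + (astar - x) = astar by abel] at h1
    have h2 : -(‖gradient W x‖ * ‖astar - x‖) ≤ ⟪gradient W x, astar - x⟫ := by
      have h3 := abs_real_inner_le_norm (gradient W x) (astar - x)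
      have h4 := neg_abs_le (⟪gradient W x, astar - x⟫ : ℝ)
      linarith
    nlinarith [sq_nonneg (γ * ‖astar - x‖ - ‖gradient W x‖), norm_nonneg (astar - x),
      mul_pos hγ hγ, hγ]
  have part1 : ∀ n : ℕ, δ n = 0 → a n = astar := by
    intro n h0
    have hg0 : gradient W (a n) = 0 := by
      have hv : ∀ v : E, ⟪gradient W (a n), v⟫ = 0 := by
        intro v
        have h := hδ n v
        rw [h0, hB2] at h
        simp at h
        linarith [h, hgradf (a n) v]
      have h := hv (gradient W (a n))
      rwa [real_inner_self_eq_norm_sq, pow_eq_zero_iff (by norm_num), norm_eq_zero] at h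
    have h1 := hPL (a n)
    rw [hg0] at h1
    simp at h1
    have h2 := hgrow (a n)
    have h3 := hmin (a n)
    have hΔ : W (a n) - W astar ≤ 0 := by
      by_contra hcon
      push_neg at hcon
      nlinarith [mul_pos hγ hcon]
    have hN : ‖a n - astar‖ ^ 2 ≤ 0 := by
      by_contra hcon
      push_neg at hcon
      nlinarith [mul_pos hγ hcon]
    have h5 : a n - astar = 0 := by
      have h6 : ‖a n - astar‖ ^ 2 = 0 := le_antisymm hN (by positivity)
      rwa [pow_eq_zero_iff (by norm_num), norm_eq_zero] at h6
    rwa [sub_eq_zero] at h5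
  set q : ℝ := 1 - 4 * ρ * σ * (1 - σ) * γ ^ 3 / L ^ 3 with hqdef
  have hq1 : q < 1 := by
    have hpos : 0 < 4 * ρ * σ * (1 - σ) * γ ^ 3 / L ^ 3 := by
      apply div_pos _ (by positivity)
      have := mul_pos (mul_pos (mul_pos (mul_pos (by norm_num : (0:ℝ) < 4) hρ0) hσ0) h1σ)
        (pow_pos hγ 3)
      linarith
    rw [hqdef]
    linarith
  have hq0 : 0 ≤ q := by
    have hσq : σ * (1 - σ) ≤ 1 / 4 := by nlinarith [sq_nonneg (2 * σ - 1)]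
    have hγ3 : γ ^ 3 ≤ L ^ 3 := pow_le_pow_left₀ hγ.le hγL 3
    have m1 : 0 < γ ^ 3 := pow_pos hγ 3
    have m2 : 0 < σ * (1 - σ) := mul_pos hσ0 h1σ
    have m3 : 4 * ρ * (σ * (1 - σ)) ≤ 2 * (σ * (1 - σ)) :=
      mul_le_mul_of_nonneg_right (by linarith : 4 * ρ ≤ 2) m2.le
    have m5 : 4 * ρ * (σ * (1 - σ)) * γ ^ 3 ≤ (1 / 2) * γ ^ 3 :=
      mul_le_mul_of_nonneg_right (by linarith : 4 * ρ * (σ * (1 - σ)) ≤ 1 / 2) m1.le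
    have hX : 4 * ρ * σ * (1 - σ) * γ ^ 3 ≤ L ^ 3 := by
      have : 4 * ρ * σ * (1 - σ) * γ ^ 3 = 4 * ρ * (σ * (1 - σ)) * γ ^ 3 := by ring
      linarith
    have hd1 : 4 * ρ * σ * (1 - σ) * γ ^ 3 / L ^ 3 ≤ 1 := by
      rw [div_le_one (by positivity)]
      exact hX
    rw [hqdef]
    linarith
  refine ⟨part1, hq1, ?_⟩
  have honestep : ∀ n : ℕ, W (a (n + 1)) - W astar ≤ q * (W (a n) - W astar) := by
    intro n
    by_cases h0 : δ n = 0
    · rw [hstep0 n h0, part1 n h0]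
      simp
    · obtain ⟨⟨hτmem, hτub⟩, hrec⟩ := hstep n h0
      set g := gradient W (a n) with hgdef
      set d := δ n with hddef
      set Bn := fderiv ℝ (fderiv ℝ W) (a n) with hBndef
      have hdne : ‖d‖ ≠ 0 := norm_ne_zero_iff.2 h0
      have hdpos : 0 < ‖d‖ ^ 2 := by positivity
      have hBdv : ∀ v : E, Bn d v = -⟪g, v⟫ := by
        intro v
        rw [hBndef, ← hB2]
        exact hδ n v
      have hBdd_lb : γ * ‖d‖ ^ 2 ≤ Bn d d := hlowB _ _
      have hBdd_ub : Bn d d ≤ L * ‖d‖ ^ 2 := hupB _ _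
      have hBddpos : 0 < Bn d d := lt_of_lt_of_le (by positivity) hBdd_lb
      have hgd : ⟪g, d⟫ = -(Bn d d) := by
        have := hBdv d
        linarith
      have harmijo : ∀ t : ℝ, 0 < t → t ≤ 2 * (1 - σ) * γ / L →
          W (a n + t • d) ≤ W (a n) + σ * t * ⟪g, d⟫ := by
        intro t ht0 ht1
        have h1 := hub (a n) (t • d)
        rw [real_inner_smul_right] at h1
        have h2 : ‖t • d‖ ^ 2 = t ^ 2 * ‖d‖ ^ 2 := by
          rw [norm_smul, Real.norm_eq_abs, mul_pow, sq_abs]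
        rw [h2] at h1
        have h3 : t * L ≤ 2 * (1 - σ) * γ := by
          rw [le_div_iff₀ hL] at ht1
          linarith
        have h4 : ⟪g, d⟫ ≤ -(γ * ‖d‖ ^ 2) := by
          rw [hgd]; linarith
        have e1 : (1 - σ) * t * ⟪g, d⟫ ≤ (1 - σ) * t * (-(γ * ‖d‖ ^ 2)) :=
          mul_le_mul_of_nonneg_left h4 (by positivity)
        have e2 : t * L * (t * ‖d‖ ^ 2) ≤ 2 * (1 - σ) * γ * (t * ‖d‖ ^ 2) :=
          mul_le_mul_of_nonneg_right h3 (by positivity)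
        linarith [e1, e2, h1]
      have hc0 : 0 < 2 * (1 - σ) * γ / L := by positivity
      have hρlt1 : ρ < 1 := lt_of_le_of_lt hρ1 (by norm_num)
      obtain ⟨k0, hk0⟩ := exists_pow_lt_of_lt_one hc0 hρlt1
      have hex : ∃ k : ℕ, ρ ^ k ≤ 2 * (1 - σ) * γ / L := ⟨k0, hk0.le⟩
      have hKle : ρ ^ (Nat.find hex) ≤ 2 * (1 - σ) * γ / L := Nat.find_spec hex
      have hKmem : ρ ^ (Nat.find hex) ∈ {t : ℝ | ∃ k : ℕ, t = ρ ^ k ∧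
          W (a n + t • δ n) ≤ W (a n) + σ * t * ⟪gradient W (a n), δ n⟫} :=
        ⟨Nat.find hex, rfl, harmijo (ρ ^ (Nat.find hex)) (pow_pos hρ0 _) hKle⟩
      have hτK : ρ ^ (Nat.find hex) ≤ τ n := hτub hKmem
      have hτpos : 0 < τ n := by
        obtain ⟨k, hk, -⟩ := hτmem
        rw [hk]
        exact pow_pos hρ0 k
      have hτlb : 2 * ρ * (1 - σ) * γ / L ≤ τ n := by
        rcases Nat.eq_zero_or_pos (Nat.find hex) with hK0 | hKpos
        · have h1τ : (1:ℝ) ≤ τ n := by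
            rw [hK0] at hτK
            simpa using hτK
          have hle1 : 2 * ρ * (1 - σ) * γ / L ≤ 1 := by
            rw [div_le_one hL]
            have t2 : 0 < (1 - σ) * γ := mul_pos h1σ hγ
            have t3 : 2 * ρ * ((1 - σ) * γ) ≤ 1 * ((1 - σ) * γ) :=
              mul_le_mul_of_nonneg_right (by linarith : 2 * ρ ≤ 1) t2.le
            have t4 : (1 - σ) * γ ≤ 1 * γ :=
              mul_le_mul_of_nonneg_right (by linarith : 1 - σ ≤ 1) hγ.le
            linarith
          linarith
        · obtain ⟨j, hj⟩ := Nat.exists_eq_add_of_lt hKpos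
          have hjK : Nat.find hex = j + 1 := by omega
          have hjlt : ¬ (ρ ^ j ≤ 2 * (1 - σ) * γ / L) := Nat.find_min hex (by omega)
          push_neg at hjlt
          have hh : ρ * (2 * (1 - σ) * γ / L) ≤ ρ ^ (Nat.find hex) := by
            rw [hjK, pow_succ, mul_comm (ρ ^ j) ρ]
            exact mul_le_mul_of_nonneg_left hjlt.le hρ0.le
          have heq : ρ * (2 * (1 - σ) * γ / L) = 2 * ρ * (1 - σ) * γ / L := by
            ring
          linarith
      -- Cauchy–Schwarz for the second derivative form
      have hBdg : Bn d g = -(‖g‖ ^ 2) := by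
        rw [hBdv g, real_inner_self_eq_norm_sq]
      have hgdB : Bn g d = -(‖g‖ ^ 2) := by
        rw [hsym (a n) g d]
        exact hBdg
      have hg2 : ‖g‖ ^ 2 ≤ L * Bn d d := by
        set s : ℝ := ‖g‖ ^ 2 / Bn d d with hsdef
        have hexp : Bn (g + s • d) (g + s • d)
            = Bn g g + s * Bn g d + s * Bn d g + s ^ 2 * Bn d d := by
          simp only [map_add, map_smul, ContinuousLinearMap.add_apply,
            ContinuousLinearMap.smul_apply, smul_eq_mul]
          ring
        have h1 : 0 ≤ Bn (g + s • d) (g + s • d) :=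
          le_trans (by positivity) (hlowB (a n) (g + s • d))
        rw [hexp, hBdg, hgdB] at h1
        have h2 : Bn g g ≤ L * ‖g‖ ^ 2 := hupB _ _
        have hs : s * Bn d d = ‖g‖ ^ 2 := by
          rw [hsdef]
          field_simp
        have h1' : 0 ≤ (Bn g g + s * -(‖g‖ ^ 2) + s * -(‖g‖ ^ 2) + s ^ 2 * Bn d d)
            * Bn d d := mul_nonneg h1 hBddpos.le
        have e1 : s * Bn d d * ‖g‖ ^ 2 = ‖g‖ ^ 2 * ‖g‖ ^ 2 := by rw [hs]
        have e2 : s * Bn d d * (s * Bn d d) = ‖g‖ ^ 2 * ‖g‖ ^ 2 := by rw [hs]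
        have h3 : ‖g‖ ^ 2 * ‖g‖ ^ 2 ≤ Bn g g * Bn d d := by nlinarith [h1', e1, e2]
        rcases lt_or_ge 0 (‖g‖ ^ 2) with hGpos | hGle
        · have h4 : Bn g g * Bn d d ≤ L * ‖g‖ ^ 2 * Bn d d :=
            mul_le_mul_of_nonneg_right h2 hBddpos.le
          have h5 : ‖g‖ ^ 2 * ‖g‖ ^ 2 ≤ L * Bn d d * ‖g‖ ^ 2 := by linarith
          exact le_of_mul_le_mul_right h5 hGpos
        · have hGz : ‖g‖ ^ 2 = 0 := le_antisymm hGle (by positivity)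
          rw [hGz]
          positivity
      -- Armijo inequality at τ n and conclusion
      obtain ⟨k', -, harm⟩ := hτmem
      have hdec : W (a n + τ n • d) ≤ W (a n) - σ * τ n * Bn d d := by
        rw [hgd] at harm
        linarith
      have hPLn := hPL (a n)
      have hΔ0 : 0 ≤ W (a n) - W astar := by linarith [hmin (a n)]
      have ha' : 2 * γ * (W (a n) - W astar) ≤ L * Bn d d := le_trans hPLn hg2
      have hb' : 2 * ρ * (1 - σ) * γ ≤ τ n * L := by
        rw [div_le_iff₀ hL] at hτlb
        linarith
      have hprod : (2 * ρ * (1 - σ) * γ) * (2 * γ * (W (a n) - W astar))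
          ≤ (τ n * L) * (L * Bn d d) :=
        mul_le_mul hb' ha' (by positivity) (by positivity)
      have hgoal : 4 * ρ * σ * (1 - σ) * γ ^ 3 * (W (a n) - W astar)
          ≤ σ * τ n * Bn d d * L ^ 3 := by
        nlinarith [mul_le_mul_of_nonneg_left hprod (mul_pos hσ0 hL).le,
          mul_nonneg (mul_nonneg (mul_nonneg (mul_nonneg hσ0.le hρ0.le) h1σ.le)
            (by positivity : (0:ℝ) ≤ γ ^ 2)) hΔ0,
          mul_nonneg (mul_nonneg (mul_nonneg (mul_nonneg (mul_nonneg hσ0.le hρ0.le) h1σ.le)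
            (by positivity : (0:ℝ) ≤ γ ^ 2)) hΔ0) (sub_nonneg.2 hγL)]
      have hkey : (1 - q) * (W (a n) - W astar) ≤ σ * τ n * Bn d d := by
        have h1q : (1 - q) * (W (a n) - W astar)
            = 4 * ρ * σ * (1 - σ) * γ ^ 3 * (W (a n) - W astar) / L ^ 3 := by
          rw [hqdef]
          ring
        rw [h1q, div_le_iff₀ (by positivity : (0:ℝ) < L ^ 3)]
        exact hgoal
      rw [hrec]
      linarith
  have hiter : ∀ n : ℕ, W (a n) - W astar ≤ q ^ n * (W (a 0) - W astar) := by
    intro n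
    induction n with
    | zero => simp
    | succ m ih =>
      have h1 := honestep m
      have h2 : q * (W (a m) - W astar) ≤ q * (q ^ m * (W (a 0) - W astar)) :=
        mul_le_mul_of_nonneg_left ih hq0
      calc W (a (m + 1)) - W astar ≤ q * (W (a m) - W astar) := h1
        _ ≤ q * (q ^ m * (W (a 0) - W astar)) := h2
        _ = q ^ (m + 1) * (W (a 0) - W astar) := by ring
  intro n
  have h1 := hgrow (a n)
  have h2 := hiter n
  have h3 := hgrowU (a 0)
  have h4 : q ^ n * (W (a 0) - W astar) ≤ q ^ n * (L / 2 * ‖a 0 - astar‖ ^ 2) :=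
    mul_le_mul_of_nonneg_left h3 (pow_nonneg hq0 n)
  have hgoal : ‖a n - astar‖ ^ 2 ≤ L * q ^ n * ‖a 0 - astar‖ ^ 2 / γ := by
    rw [le_div_iff₀ hγ]
    nlinarith [h1, h2, h4]
  calc ‖a n - astar‖ ^ 2 ≤ L * q ^ n * ‖a 0 - astar‖ ^ 2 / γ := hgoal
    _ = L / γ * q ^ n * ‖a 0 - astar‖ ^ 2 := by ring
end

section
/- Let E be a finite-dimensional real inner product space and W : E → ℝ twice continuously differentiable with constants 0 < γ ≤ L such that γ‖ξ‖² ≤ D²W(x)[ξ, ξ] ≤ L‖ξ‖² for all x, ξ ∈ E, and assume additionally that the Hessian is Lipschitz continuous with constant L'' > 0, i.e. |D²W(x)[ξ, ξ] − D²W(y)[ξ, ξ]| ≤ L'' ‖x − y‖ ‖ξ‖² for all x, y, ξ ∈ E. Let σ ∈ (0, 1/2), let a ∈ E, and let δ be the Newton direction at a. If ‖δ‖ ≤ (1 − 2σ)γ/L'', then the full Newton step satisfies the Armijo condition with τ = 1: W(a + δ) ≤ W(a) + σ⟨∇W(a), δ⟩; consequently the backtracking line search returns the step size τ = 1. -/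
open scoped RealInnerProductSpace

/-- If the Hessian is Lipschitz continuous and the Newton direction is small enough,
then the full Newton step `τ = 1` satisfies the Armijo condition, and hence the
backtracking line search returns the step size `1`. -/
theorem stmt_13 {E : Type*} [NormedAddCommGroup E] [InnerProductSpace ℝ E]
    [FiniteDimensional ℝ E]
    (W : E → ℝ) (γ L : ℝ) (hγ : 0 < γ) (hγL : γ ≤ L)
    (hW : ContDiff ℝ 2 W)
    (hlow : ∀ x ξ : E, γ * ‖ξ‖ ^ 2 ≤ iteratedFDeriv ℝ 2 W x ![ξ, ξ])
    (hup : ∀ x ξ : E, iteratedFDeriv ℝ 2 W x ![ξ, ξ] ≤ L * ‖ξ‖ ^ 2)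
    (L'' : ℝ) (hL'' : 0 < L'')
    (hhess : ∀ x y ξ : E,
      |iteratedFDeriv ℝ 2 W x ![ξ, ξ] - iteratedFDeriv ℝ 2 W y ![ξ, ξ]| ≤
        L'' * ‖x - y‖ * ‖ξ‖ ^ 2)
    (σ : ℝ) (hσ0 : 0 < σ) (hσ1 : σ < 1 / 2)
    (a δ : E)
    (hδ : ∀ v : E, iteratedFDeriv ℝ 2 W a ![δ, v] = -⟪gradient W a, v⟫)
    (hsmall : ‖δ‖ ≤ (1 - 2 * σ) * γ / L'') :
    W (a + δ) ≤ W a + σ * ⟪gradient W a, δ⟫ ∧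
    ∀ ρ : ℝ, 0 < ρ → ρ ≤ 1 / 2 →
      IsGreatest {t : ℝ | ∃ k : ℕ, t = ρ ^ k ∧
        W (a + t • δ) ≤ W a + σ * t * ⟪gradient W a, δ⟫} 1 := by
  have hW1 : ContDiff ℝ 1 (fderiv ℝ W) := hW.fderiv_right (by norm_num)
  have hWd : Differentiable ℝ W := hW.differentiable (by norm_num)
  have hW1d : Differentiable ℝ (fderiv ℝ W) := hW1.differentiable (by norm_num)
  set B : E → ℝ := fun x => fderiv ℝ (fderiv ℝ W) x δ δ with hBdef
  have hIter : ∀ x : E, iteratedFDeriv ℝ 2 W x ![δ, δ] = B x := by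
    intro x
    rw [iteratedFDeriv_two_apply]
    simp [hBdef]
  have hgradv : ∀ v : E, ⟪gradient W a, v⟫ = fderiv ℝ W a v := by
    intro v
    simp only [gradient]
    exact InnerProductSpace.toDual_symm_apply
  have hinner : ⟪gradient W a, δ⟫ = -B a := by
    have h := hδ δ
    rw [hIter a] at h
    linarith
  -- the line through a in direction δ
  have hline : ∀ t : ℝ, HasDerivAt (fun s : ℝ => a + s • δ) δ t := by
    intro t
    simpa using ((hasDerivAt_id t).smul_const δ).const_add a
  set g1 : ℝ → ℝ := fun s => fderiv ℝ W (a + s • δ) δ with hg1def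
  have hg : ∀ t : ℝ, HasDerivAt (fun s : ℝ => W (a + s • δ)) (g1 t) t := by
    intro t
    exact (hWd (a + t • δ)).hasFDerivAt.comp_hasDerivAt t (hline t)
  have hg1 : ∀ t : ℝ, HasDerivAt g1 (B (a + t • δ)) t := by
    intro t
    have h1 : HasFDerivAt (fun x : E => fderiv ℝ W x δ)
        ((ContinuousLinearMap.apply ℝ ℝ δ).comp (fderiv ℝ (fderiv ℝ W) (a + t • δ)))
        (a + t • δ) :=
      (ContinuousLinearMap.apply ℝ ℝ δ).hasFDerivAt.comp (a + t • δ)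
        (hW1d (a + t • δ)).hasFDerivAt
    have h2 := h1.comp_hasDerivAt t (hline t)
    exact h2
  set F1 : ℝ → ℝ := fun t => g1 0 + t * B a + t ^ 2 / 2 * (L'' * ‖δ‖ ^ 3) - g1 t with hF1def
  set F : ℝ → ℝ := fun t =>
    t * g1 0 + t ^ 2 / 2 * B a + t ^ 3 / 6 * (L'' * ‖δ‖ ^ 3) + W a - W (a + t • δ) with hFdef
  have hF1' : ∀ t : ℝ, HasDerivAt F1 (B a + t * (L'' * ‖δ‖ ^ 3) - B (a + t • δ)) t := by
    intro t
    have h1 : HasDerivAt (fun s : ℝ => g1 0 + s * B a + s ^ 2 / 2 * (L'' * ‖δ‖ ^ 3))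
        (B a + t * (L'' * ‖δ‖ ^ 3)) t := by
      have h2 := ((hasDerivAt_const t (g1 0)).add ((hasDerivAt_id t).mul_const (B a))).add
        (((hasDerivAt_pow 2 t).div_const 2).mul_const (L'' * ‖δ‖ ^ 3))
      refine h2.congr_deriv ?_
      push_cast
      ring
    exact h1.sub (hg1 t)
  have hF' : ∀ t : ℝ, HasDerivAt F (F1 t) t := by
    intro t
    have h1 : HasDerivAt (fun s : ℝ =>
        s * g1 0 + s ^ 2 / 2 * B a + s ^ 3 / 6 * (L'' * ‖δ‖ ^ 3) + W a)
        (g1 0 + t * B a + t ^ 2 / 2 * (L'' * ‖δ‖ ^ 3)) t := by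
      have h2 := ((((hasDerivAt_id t).mul_const (g1 0)).add
        (((hasDerivAt_pow 2 t).div_const 2).mul_const (B a))).add
        (((hasDerivAt_pow 3 t).div_const 6).mul_const (L'' * ‖δ‖ ^ 3))).add
        (hasDerivAt_const t (W a))
      refine h2.congr_deriv ?_
      push_cast
      ring
    exact h1.sub (hg t)
  -- the second derivative bound
  have hBK : ∀ t ∈ Set.Icc (0 : ℝ) 1, 0 ≤ B a + t * (L'' * ‖δ‖ ^ 3) - B (a + t • δ) := by
    intro t ht
    have h := hhess (a + t • δ) a δ
    rw [hIter, hIter] at h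
    have hn : ‖a + t • δ - a‖ = t * ‖δ‖ := by
      simp [norm_smul, abs_of_nonneg ht.1]
    rw [hn] at h
    have h2 := (abs_le.1 h).2
    nlinarith [norm_nonneg δ]
  have hF1mono : MonotoneOn F1 (Set.Icc (0 : ℝ) 1) := by
    apply monotoneOn_of_deriv_nonneg (convex_Icc 0 1)
    · exact fun t _ => (hF1' t).differentiableAt.continuousAt.continuousWithinAt
    · intro t ht
      exact (hF1' t).differentiableAt.differentiableWithinAt
    · intro t ht
      rw [interior_Icc] at ht
      rw [(hF1' t).deriv]
      exact hBK t (Set.mem_Icc_of_Ioo ht)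
  have hF10 : F1 0 = 0 := by simp [hF1def]
  have hF1nonneg : ∀ t ∈ Set.Icc (0 : ℝ) 1, 0 ≤ F1 t := by
    intro t ht
    have := hF1mono (Set.left_mem_Icc.2 one_pos.le) ht ht.1
    rwa [hF10] at this
  have hFmono : MonotoneOn F (Set.Icc (0 : ℝ) 1) := by
    apply monotoneOn_of_deriv_nonneg (convex_Icc 0 1)
    · exact fun t _ => (hF' t).differentiableAt.continuousAt.continuousWithinAt
    · intro t ht
      exact (hF' t).differentiableAt.differentiableWithinAt
    · intro t ht
      rw [interior_Icc] at ht
      rw [(hF' t).deriv]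
      exact hF1nonneg t (Set.mem_Icc_of_Ioo ht)
  have hF0 : F 0 = 0 := by simp [hFdef]
  have hF1le : 0 ≤ F 1 := by
    have := hFmono (Set.left_mem_Icc.2 one_pos.le) (Set.right_mem_Icc.2 one_pos.le)
      zero_le_one
    rwa [hF0] at this
  have hFone : F 1 = g1 0 + B a / 2 + (L'' * ‖δ‖ ^ 3) / 6 + W a - W (a + δ) := by
    simp [hFdef]
    ring
  have hg10 : g1 0 = ⟪gradient W a, δ⟫ := by
    rw [hgradv δ]
    simp [hg1def]
  -- main inequality
  have hHγ : γ * ‖δ‖ ^ 2 ≤ B a := by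
    have := hlow a δ
    rwa [hIter] at this
  have hKb : L'' * ‖δ‖ ^ 3 ≤ (1 - 2 * σ) * γ * ‖δ‖ ^ 2 := by
    have h1 : ‖δ‖ * L'' ≤ (1 - 2 * σ) * γ := (le_div_iff₀ hL'').1 hsmall
    nlinarith [sq_nonneg ‖δ‖, norm_nonneg δ]
  have hK0 : 0 ≤ L'' * ‖δ‖ ^ 3 := by positivity
  have hHK : L'' * ‖δ‖ ^ 3 ≤ (1 - 2 * σ) * B a := by
    have h2 : (1 - 2 * σ) * (γ * ‖δ‖ ^ 2) ≤ (1 - 2 * σ) * B a :=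
      mul_le_mul_of_nonneg_left hHγ (by linarith)
    nlinarith
  have hmain : W (a + δ) ≤ W a + σ * ⟪gradient W a, δ⟫ := by
    rw [hFone, hg10, hinner] at hF1le
    rw [hinner]
    linarith
  refine ⟨hmain, fun ρ hρ0 hρ1 => ⟨⟨0, by simp, by simpa using hmain⟩, ?_⟩⟩
  rintro t ⟨k, rfl, -⟩
  exact pow_le_one₀ hρ0.le (by linarith)
end
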